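/- arXiv:2009.10694 — 3 statements merged into one kernel-verified Lean document; each statement's English description precedes it below -/
import Mathlib

section
/- Let R be a local principal ideal domain of prime characteristic p > 0 with maximal ideal generated by π. For any integers n, m ≥ 0 and any e ≥ 0, the map sending (Frobenius-pushforward of x) ⊗ y to the Frobenius-pushforward of x·y^(p^e) gives an R-module isomorphism F^e_*⟨π^n⟩ ⊗_R ⟨π^m⟩ ≅ F^e_*⟨π^(n+m·p^e)⟩. -/
open Classical TensorProduct

noncomputable section

/-- The Frobenius pushforward `F^e_* M`: the module `M` with scalars restricted along the
`e`-th iterate of the Frobenius endomorphism of `R`. -/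
def FrobMod (R : Type*) [CommSemiring R] (p : ℕ) [ExpChar R p] (e : ℕ)
    (M : Type*) [AddCommMonoid M] [Module R M] : Type _ := M

namespace FrobMod

variable {R : Type*} [CommSemiring R] {p : ℕ} [ExpChar R p] {e : ℕ}
variable {M : Type*} [AddCommMonoid M] [Module R M]

instance : AddCommMonoid (FrobMod R p e M) := inferInstanceAs (AddCommMonoid M)

instance {M : Type*} [AddCommGroup M] [Module R M] : AddCommGroup (FrobMod R p e M) :=
  inferInstanceAs (AddCommGroup M)

instance : Module R (FrobMod R p e M) := Module.compHom M (iterateFrobenius R p e)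

/-- The canonical map `M → F^e_* M`, `m ↦ F^e_* m`. -/
def mk (R : Type*) [CommSemiring R] (p : ℕ) [ExpChar R p] (e : ℕ)
    {M : Type*} [AddCommMonoid M] [Module R M] : M → FrobMod R p e M := id

/-- The inverse of `FrobMod.mk`. -/
def un {R : Type*} [CommSemiring R] {p : ℕ} [ExpChar R p] {e : ℕ}
    {M : Type*} [AddCommMonoid M] [Module R M] : FrobMod R p e M → M := id

end FrobMod

/-- `M` (up to isomorphism) is a direct summand of `C`. -/
def IsDirectSummand (R : Type*) [Ring R] (M : Type*) [AddCommGroup M] [Module R M]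
    (C : Type*) [AddCommGroup C] [Module R C] : Prop :=
  ∃ P Q : Submodule R C, IsCompl P Q ∧ Nonempty (P ≃ₗ[R] M)

/-- `a^M(C)`: the maximal number of copies of `M` appearing in a direct sum
decomposition of `C`. -/
def maxCopies (R : Type*) [Ring R] (M : Type*) [AddCommGroup M] [Module R M]
    (C : Type*) [AddCommGroup C] [Module R C] : ℕ :=
  sSup {a : ℕ | IsDirectSummand R (Fin a → M) C}

/-- The free rank of `N`: the maximal rank of a free direct summand of `N`. -/
def freeRank (R : Type*) [Ring R] (N : Type*) [AddCommGroup N] [Module R N] : ℕ :=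
  maxCopies R R N

/-- The generic rank of a module over a domain. -/
def genRank (R : Type*) [CommRing R] (M : Type*) [AddCommGroup M] [Module R M] : ℕ :=
  Module.finrank (FractionRing R) (LocalizedModule (nonZeroDivisors R) M)

/-- `R` is strongly `F`-regular. -/
def StronglyFRegular (R : Type*) [CommRing R] (p : ℕ) [ExpChar R p] : Prop :=
  ∀ r : R, r ≠ 0 → ∃ e : ℕ, ∃ φ : FrobMod R p e R →ₗ[R] R, φ (FrobMod.mk R p e r) = 1

/-- `R` is `F`-finite. -/
def FFinite (R : Type*) [CommRing R] (p : ℕ) [ExpChar R p] : Prop :=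
  ∀ e : ℕ, Module.Finite R (FrobMod R p e R)

/-- The height one primes of `R`. -/
def HeightOnePrime (R : Type*) [CommRing R] : Type _ :=
  {P : PrimeSpectrum R // Order.height P = 1}

/-- The order of vanishing of `a : R` at the prime `P`, defined via symbolic powers:
the largest `n` with `a ∈ P^n R_P ∩ R`. -/
def ordAt (R : Type*) [CommRing R] (P : PrimeSpectrum R) (a : R) : ℕ :=
  haveI := P.isPrime
  sSup {n : ℕ | a ∈ (Ideal.map (algebraMap R (Localization.AtPrime P.asIdeal))
      (P.asIdeal ^ n)).comap (algebraMap R (Localization.AtPrime P.asIdeal))}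

/-- The valuation `ν_P(f)` of an element `f` of the fraction field `K` at a height one
prime `P`, computed as `ν_P(a) - ν_P(b)` for a representation `f = a/b`. -/
def valAt (R : Type*) [CommRing R] (K : Type*) [CommRing K] [Algebra R K]
    (P : PrimeSpectrum R) (f : K) : ℤ :=
  if h : ∃ ab : R × R, ab.2 ≠ 0 ∧ f * algebraMap R K ab.2 = algebraMap R K ab.1 then
    (ordAt R P h.choose.1 : ℤ) - (ordAt R P h.choose.2 : ℤ)
  else 0

/-- A Weil divisor on `Spec R`: an element of the free abelian group on height one primes. -/
abbrev WeilDivisor (R : Type*) [CommRing R] : Type _ := HeightOnePrime R →₀ ℤ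

/-- The underlying set `{f ∈ K^× ∣ div(f) + D ≥ 0} ∪ {0}` of the divisorial ideal `R(D)`. -/
def divisorialSet (R : Type*) [CommRing R] (K : Type*) [CommRing K] [Algebra R K]
    (D : WeilDivisor R) : Set K :=
  {f | f = 0 ∨ ∀ P : HeightOnePrime R, 0 ≤ valAt R K P.1 f + D P}

/-- The divisorial ideal `R(D) ⊆ K`, as an `R`-submodule of `K`.  (For a Noetherian
normal domain `R` the spanning set `divisorialSet` is already an `R`-submodule, so that
this is literally `{f ∈ K^× ∣ div(f) + D ≥ 0} ∪ {0}`.) -/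
def divisorialIdeal (R : Type*) [CommRing R] (K : Type*) [CommRing K] [Algebra R K]
    (D : WeilDivisor R) : Submodule R K :=
  Submodule.span R (divisorialSet R K D)

/-- The set of principal Weil divisors `div(f)`, `f ∈ K^×`. -/
def principalDivisors (R : Type*) [CommRing R] (K : Type*) [CommRing K] [Algebra R K] :
    Set (WeilDivisor R) :=
  {D | ∃ f : K, f ≠ 0 ∧ ∀ P : HeightOnePrime R, (D P : ℤ) = valAt R K P.1 f}

/-- The divisor class group: Weil divisors modulo principal divisors. -/
def WeilClassGroup (R : Type*) [CommRing R] (K : Type*) [CommRing K] [Algebra R K] :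
    Type _ :=
  WeilDivisor R ⧸ AddSubgroup.closure (principalDivisors R K)

instance (R : Type*) [CommRing R] (K : Type*) [CommRing K] [Algebra R K] :
    AddCommGroup (WeilClassGroup R K) :=
  inferInstanceAs (AddCommGroup (WeilDivisor R ⧸ AddSubgroup.closure (principalDivisors R K)))

/-- Two Weil divisors are linearly equivalent if they differ by a principal divisor. -/
def LinearlyEquivalent (R : Type*) [CommRing R] (K : Type*) [CommRing K] [Algebra R K]
    (D₁ D₂ : WeilDivisor R) : Prop :=
  D₁ - D₂ ∈ AddSubgroup.closure (principalDivisors R K)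

/-- A Weil divisor is torsion if a nonzero multiple of it is principal. -/
def IsTorsionDivisor (R : Type*) [CommRing R] (K : Type*) [CommRing K] [Algebra R K]
    (D : WeilDivisor R) : Prop :=
  ∃ n : ℤ, n ≠ 0 ∧ n • D ∈ AddSubgroup.closure (principalDivisors R K)

/-- The depth of `M` with respect to the ideal `I`: the supremum of lengths of
regular sequences on `M` contained in `I`. -/
def depthIn (R : Type*) [CommRing R] (I : Ideal R)
    (M : Type*) [AddCommGroup M] [Module R M] : ℕ∞ :=
  sSup {n : ℕ∞ | ∃ rs : List R, (rs.length : ℕ∞) = n ∧ (∀ r ∈ rs, r ∈ I) ∧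
    RingTheory.Sequence.IsRegular M rs}

/-- A finitely generated module over a Noetherian local ring is maximal Cohen–Macaulay if
its depth equals the Krull dimension of the ring. -/
def IsMaximalCohenMacaulay (R : Type*) [CommRing R] [IsLocalRing R]
    (M : Type*) [AddCommGroup M] [Module R M] : Prop :=
  (depthIn R (IsLocalRing.maximalIdeal R) M : WithBot ℕ∞) = ringKrullDim R

/-- Serre's condition `(S₂)` for a module. -/
def IsS2 (R : Type*) [CommRing R] (M : Type*) [AddCommGroup M] [Module R M] : Prop :=
  ∀ P : PrimeSpectrum R,
    haveI := P.isPrime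
    min 2 (ringKrullDim (Localization.AtPrime P.asIdeal)) ≤
      (depthIn (Localization.AtPrime P.asIdeal)
        (IsLocalRing.maximalIdeal (Localization.AtPrime P.asIdeal))
        (LocalizedModule P.asIdeal.primeCompl M) : WithBot ℕ∞)

end

open Filter MvPolynomial

noncomputable section

namespace Stmt0Aux

variable {R : Type*} [CommRing R] {p : ℕ} [ExpChar R p] {e : ℕ}

lemma frob_smul {M : Type*} [AddCommMonoid M] [Module R M] (r : R) (z : FrobMod R p e M) :
    FrobMod.un (r • z) = r ^ p ^ e • FrobMod.un z := rfl

lemma frob_add {M : Type*} [AddCommMonoid M] [Module R M] (z w : FrobMod R p e M) :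
    FrobMod.un (z + w) = FrobMod.un z + FrobMod.un w := rfl

lemma mem_aux (π : R) (n m : ℕ) {x y : R} (hx : x ∈ Ideal.span {π ^ n})
    (hy : y ∈ Ideal.span {π ^ m}) :
    x * y ^ p ^ e ∈ Ideal.span {π ^ (n + m * p ^ e)} := by
  rw [Ideal.mem_span_singleton] at *
  rw [pow_add, pow_mul]
  exact mul_dvd_mul hx (pow_dvd_pow_of_dvd hy _)

def unc (π : R) (n : ℕ) (x : FrobMod R p e (Ideal.span {π ^ n})) : R :=
  ((FrobMod.un x : Ideal.span {π ^ n}) : R)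

lemma unc_mem (π : R) (n : ℕ) (x : FrobMod R p e (Ideal.span {π ^ n})) :
    unc π n x ∈ Ideal.span {π ^ n} := (FrobMod.un x : Ideal.span {π ^ n}).2

lemma unc_add (π : R) (n : ℕ) (x y : FrobMod R p e (Ideal.span {π ^ n})) :
    unc π n (x + y) = unc π n x + unc π n y := rfl

lemma unc_smul (π : R) (n : ℕ) (r : R) (x : FrobMod R p e (Ideal.span {π ^ n})) :
    unc π n (r • x) = r ^ p ^ e * unc π n x := rfl

/-- The forward linear map `F^e_* ⟨π^n⟩ ⊗ ⟨π^m⟩ → F^e_* ⟨π^{n+m p^e}⟩`. -/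
def fwd (π : R) (n m : ℕ) :
    (TensorProduct R (FrobMod R p e (Ideal.span {π ^ n})) (Ideal.span {π ^ m})) →ₗ[R]
      FrobMod R p e (Ideal.span {π ^ (n + m * p ^ e)}) :=
  TensorProduct.lift <| LinearMap.mk₂ R
    (fun x y => FrobMod.mk R p e
      ⟨unc π n x * (y : R) ^ p ^ e, mem_aux π n m (unc_mem π n x) y.2⟩)
    (fun x₁ x₂ y => by
      apply Subtype.ext
      show unc π n (x₁ + x₂) * _ = unc π n x₁ * _ + unc π n x₂ * _
      rw [unc_add]; ring)
    (fun r x y => by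
      apply Subtype.ext
      show unc π n (r • x) * (y : R) ^ p ^ e = unc π _ (r • FrobMod.mk R p e _)
      rw [unc_smul, unc_smul]
      show _ = r ^ p ^ e * (unc π n x * (y : R) ^ p ^ e)
      ring)
    (fun x y₁ y₂ => by
      apply Subtype.ext
      show unc π n x * ((y₁ : R) + (y₂ : R)) ^ p ^ e =
        unc π n x * (y₁ : R) ^ p ^ e + unc π n x * (y₂ : R) ^ p ^ e
      rw [add_pow_expChar_pow]; ring)
    (fun r x y => by
      apply Subtype.ext
      show unc π n x * (r * (y : R)) ^ p ^ e = unc π _ (r • FrobMod.mk R p e _)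
      rw [unc_smul]
      show _ = r ^ p ^ e * (unc π n x * (y : R) ^ p ^ e)
      rw [mul_pow]; ring)

lemma fwd_apply (π : R) (n m : ℕ) (x : Ideal.span {π ^ n}) (y : Ideal.span {π ^ m}) :
    unc π (n + m * p ^ e) (fwd π n m (FrobMod.mk R p e x ⊗ₜ[R] y)) =
      (x : R) * (y : R) ^ p ^ e := rfl

end Stmt0Aux

namespace Stmt0Aux

variable {R : Type*} [CommRing R] [IsDomain R] {p : ℕ} [ExpChar R p] {e : ℕ}

def coeffFn (π : R) (N : ℕ) (z : Ideal.span {π ^ N}) : R :=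
  (Ideal.mem_span_singleton'.mp z.2).choose

lemma coeff_spec (π : R) (N : ℕ) (z : Ideal.span {π ^ N}) :
    coeffFn π N z * π ^ N = (z : R) := (Ideal.mem_span_singleton'.mp z.2).choose_spec

lemma coeff_unique {π : R} {N : ℕ} (hN : π ^ N ≠ 0) {z : Ideal.span {π ^ N}} {a : R}
    (h : a * π ^ N = (z : R)) : coeffFn π N z = a :=
  mul_right_cancel₀ hN (by rw [coeff_spec, h])

/-- The backward linear map. -/
def bwd (π : R) (n m : ℕ) (hN : π ^ (n + m * p ^ e) ≠ 0) :
    FrobMod R p e (Ideal.span {π ^ (n + m * p ^ e)}) →ₗ[R]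
      (TensorProduct R (FrobMod R p e (Ideal.span {π ^ n})) (Ideal.span {π ^ m})) where
  toFun z := FrobMod.mk R p e
      (⟨coeffFn π _ (FrobMod.un z : Ideal.span {π ^ (n + m * p ^ e)}) * π ^ n,
        Ideal.mem_span_singleton'.mpr ⟨_, rfl⟩⟩ : Ideal.span {π ^ n}) ⊗ₜ[R]
      ⟨π ^ m, Ideal.mem_span_singleton_self _⟩
  map_add' z w := by
    have h : coeffFn π _ (FrobMod.un (z + w) : Ideal.span {π ^ (n + m * p ^ e)}) =
        coeffFn π _ (FrobMod.un z : Ideal.span {π ^ (n + m * p ^ e)}) +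
        coeffFn π _ (FrobMod.un w : Ideal.span {π ^ (n + m * p ^ e)}) := by
      apply coeff_unique hN
      rw [add_mul, coeff_spec, coeff_spec]
      rfl
    rw [← TensorProduct.add_tmul]
    congr 1
    apply Subtype.ext
    show _ * π ^ n = _ * π ^ n + _ * π ^ n
    rw [h, add_mul]
  map_smul' r z := by
    have h : coeffFn π _ (FrobMod.un (r • z) : Ideal.span {π ^ (n + m * p ^ e)}) =
        r ^ p ^ e * coeffFn π _ (FrobMod.un z : Ideal.span {π ^ (n + m * p ^ e)}) := by
      apply coeff_unique hN
      rw [mul_assoc, coeff_spec]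
      rfl
    show _ = r • (_ ⊗ₜ[R] _)
    rw [TensorProduct.smul_tmul']
    congr 1
    apply Subtype.ext
    show _ * π ^ n = r ^ p ^ e * (_ * π ^ n)
    rw [h, mul_assoc]

lemma fwd_bwd (π : R) (n m : ℕ) (hN : π ^ (n + m * p ^ e) ≠ 0) :
    (fwd π n m).comp (bwd π n m hN) = LinearMap.id := by
  apply LinearMap.ext
  intro z
  apply Subtype.ext
  show coeffFn π _ (FrobMod.un z : Ideal.span {π ^ (n + m * p ^ e)}) * π ^ n *
      (π ^ m) ^ p ^ e = _
  rw [mul_assoc, ← pow_mul, ← pow_add, coeff_spec]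
  rfl

lemma bwd_fwd (π : R) (n m : ℕ) (hN : π ^ (n + m * p ^ e) ≠ 0) :
    (bwd π n m hN).comp (fwd π n m) = LinearMap.id := by
  apply TensorProduct.ext'
  intro x y
  obtain ⟨a, ha⟩ := Ideal.mem_span_singleton'.mp (unc_mem π n x)
  obtain ⟨b, hb⟩ := Ideal.mem_span_singleton'.mp y.2
  show FrobMod.mk R p e (⟨_ * π ^ n, _⟩ : Ideal.span {π ^ n}) ⊗ₜ[R]
      (⟨π ^ m, _⟩ : Ideal.span {π ^ m}) = x ⊗ₜ[R] y
  have hc : coeffFn π (n + m * p ^ e)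
      (FrobMod.un (fwd π n m (x ⊗ₜ[R] y)) : Ideal.span {π ^ (n + m * p ^ e)}) =
      a * b ^ p ^ e := by
    apply coeff_unique hN
    show a * b ^ p ^ e * π ^ (n + m * p ^ e) = unc π n x * (y : R) ^ p ^ e
    rw [← ha, ← hb, pow_add, pow_mul, mul_pow]
    ring
  trans (b • x) ⊗ₜ[R] (⟨π ^ m, Ideal.mem_span_singleton_self _⟩ : Ideal.span {π ^ m})
  · congr 1
    apply Subtype.ext
    show coeffFn π (n + m * p ^ e)
        (FrobMod.un (fwd π n m (x ⊗ₜ[R] y)) : Ideal.span {π ^ (n + m * p ^ e)}) * π ^ n =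
      b ^ p ^ e * unc π n x
    rw [hc, ← ha]
    ring
  · rw [TensorProduct.smul_tmul]
    congr 1
    apply Subtype.ext
    exact hb

end Stmt0Aux

end

-- STATEMENT 0
theorem stmt0 (R : Type*) [CommRing R] [IsDomain R] [IsPrincipalIdealRing R] [IsLocalRing R]
    (p : ℕ) (hp : p.Prime) [CharP R p] [ExpChar R p] (π : R)
    (hπ : IsLocalRing.maximalIdeal R = Ideal.span {π}) (n m e : ℕ) :
    ∃ φ : (TensorProduct R (FrobMod R p e (Ideal.span {π ^ n})) (Ideal.span {π ^ m})) ≃ₗ[R]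
        FrobMod R p e (Ideal.span {π ^ (n + m * p ^ e)}),
      ∀ (x : Ideal.span {π ^ n}) (y : Ideal.span {π ^ m}),
        ((FrobMod.un (φ (FrobMod.mk R p e x ⊗ₜ[R] y)) :
            Ideal.span {π ^ (n + m * p ^ e)}) : R) = (x : R) * (y : R) ^ p ^ e := by
  by_cases hN : π ^ (n + m * p ^ e) = 0
  · have hπ0 : π = 0 := by
      by_contra h
      exact pow_ne_zero _ h hN
    have hNne : n + m * p ^ e ≠ 0 := by
      intro h
      rw [h, pow_zero] at hN
      exact one_ne_zero hN
    haveI hs : Subsingleton (Ideal.span {π ^ (n + m * p ^ e)} : Ideal R) := by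
      rw [Ideal.span_singleton_eq_bot.mpr hN]
      infer_instance
    haveI hsF : Subsingleton (FrobMod R p e (Ideal.span {π ^ (n + m * p ^ e)} : Ideal R)) := hs
    have hcase : n ≠ 0 ∨ m ≠ 0 := by
      rcases Nat.eq_zero_or_pos n with h1 | h1
      · right
        intro hm
        exact hNne (by simp [h1, hm])
      · left; omega
    have key : ∀ x : (Ideal.span {π ^ n} : Ideal R), ∀ y : (Ideal.span {π ^ m} : Ideal R),
        (x : R) * (y : R) ^ p ^ e = 0 := by
      intro x y
      rcases hcase with h | h
      · have hx : (x : R) = 0 := by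
          obtain ⟨c, hc⟩ := Ideal.mem_span_singleton.mp x.2
          rw [hc, hπ0, zero_pow h, zero_mul]
        rw [hx, zero_mul]
      · have hy : (y : R) = 0 := by
          obtain ⟨c, hc⟩ := Ideal.mem_span_singleton.mp y.2
          rw [hc, hπ0, zero_pow h, zero_mul]
        rw [hy, zero_pow (pow_ne_zero e hp.ne_zero), mul_zero]
    haveI : Subsingleton
        (TensorProduct R (FrobMod R p e (Ideal.span {π ^ n})) (Ideal.span {π ^ m})) := by
      rcases hcase with h | h
      · haveI h1 : Subsingleton (Ideal.span {π ^ n} : Ideal R) := by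
          rw [Ideal.span_singleton_eq_bot.mpr (by rw [hπ0, zero_pow h])]
          infer_instance
        haveI : Subsingleton (FrobMod R p e (Ideal.span {π ^ n} : Ideal R)) := h1
        infer_instance
      · haveI h1 : Subsingleton (Ideal.span {π ^ m} : Ideal R) := by
          rw [Ideal.span_singleton_eq_bot.mpr (by rw [hπ0, zero_pow h])]
          infer_instance
        infer_instance
    refine ⟨LinearEquiv.ofLinear 0 0 (LinearMap.ext fun z => Subsingleton.elim _ _)
      (LinearMap.ext fun z => Subsingleton.elim _ _), ?_⟩
    intro x y
    rw [key x y]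
    have : (FrobMod.un ((LinearEquiv.ofLinear 0 0 (LinearMap.ext fun z => Subsingleton.elim _ _)
        (LinearMap.ext fun z => Subsingleton.elim _ _) :
        (TensorProduct R (FrobMod R p e (Ideal.span {π ^ n})) (Ideal.span {π ^ m})) ≃ₗ[R]
        FrobMod R p e (Ideal.span {π ^ (n + m * p ^ e)}))
        (FrobMod.mk R p e x ⊗ₜ[R] y)) : Ideal.span {π ^ (n + m * p ^ e)}) = 0 :=
      Subsingleton.elim _ _
    rw [this]
    rfl
  · refine ⟨LinearEquiv.ofLinear (Stmt0Aux.fwd π n m) (Stmt0Aux.bwd π n m hN)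
      (Stmt0Aux.fwd_bwd π n m hN) (Stmt0Aux.bwd_fwd π n m hN), ?_⟩
    intro x y
    exact Stmt0Aux.fwd_apply π n m x y
end

section
/- Let R be a Noetherian normal domain with fraction field K, and let D₁, D₂ be Weil divisors on Spec(R). Then Hom_R(R(D₁), R(D₂)) is isomorphic as an R-module to R(D₂ − D₁), where R(D) = {f ∈ K^× : div(f) + D ≥ 0} ∪ {0} is the divisorial ideal of D. -/
open Classical TensorProduct

open Filter MvPolynomial

section Aux

open IsLocalRing

variable {R : Type*} [CommRing R] [IsDomain R] [IsNoetherianRing R] [IsIntegrallyClosed R]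

namespace HOP

variable (P : HeightOnePrime R)

instance (P : HeightOnePrime R) : P.1.asIdeal.IsPrime := P.1.isPrime

lemma ne_bot : P.1.asIdeal ≠ ⊥ := by
  intro h
  have hmin : IsMin P.1 := by
    intro Q _
    show P.1.asIdeal ≤ Q.asIdeal
    rw [h]
    exact bot_le
  have := P.2
  rw [Order.height_eq_zero.2 hmin] at this
  simp at this

/-- Incomparability: a nonzero prime contained in a height-one prime equals it. -/
lemma eq_of_le {q : Ideal R} (hq : q.IsPrime) (hq0 : q ≠ ⊥) (hle : q ≤ P.1.asIdeal) :
    q = P.1.asIdeal := by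
  by_contra hne
  have h1 : (⟨⊥, Ideal.bot_prime⟩ : PrimeSpectrum R) < ⟨q, hq⟩ :=
    lt_of_le_of_ne bot_le (by simp [PrimeSpectrum.ext_iff]; exact fun h => hq0 h.symm)
  have h2 : (⟨q, hq⟩ : PrimeSpectrum R) < P.1 := by
    refine lt_of_le_of_ne hle ?_
    intro h
    exact hne (congrArg PrimeSpectrum.asIdeal h)
  let c : LTSeries (PrimeSpectrum R) :=
    ((RelSeries.singleton _ (⟨⊥, Ideal.bot_prime⟩ : PrimeSpectrum R)).snoc _ h1).snoc _ (by exact h2)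
  have hlen : c.length = 2 := rfl
  have hlast : c.last = P.1 := by exact RelSeries.last_snoc _ _ _
  have := Order.length_le_height_last (p := c)
  rw [hlen, hlast, P.2] at this
  norm_num at this

end HOP

end Aux
section Aux2

open IsLocalRing

variable {R : Type*} [CommRing R] [IsDomain R] [IsNoetherianRing R] [IsIntegrallyClosed R]

namespace HOP

/-- Localization of `R` at a height one prime. -/
abbrev Loc (P : HeightOnePrime R) : Type _ := Localization.AtPrime P.1.asIdeal

variable (P : HeightOnePrime R)

lemma loc_inj : Function.Injective (algebraMap R (Loc P)) :=
  IsLocalization.injective _ P.1.asIdeal.primeCompl_le_nonZeroDivisors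

instance : IsDiscreteValuationRing (Loc P) := by
  have hIC : IsIntegrallyClosed (Loc P) :=
    isIntegrallyClosed_of_isLocalization (Loc P) P.1.asIdeal.primeCompl
      P.1.asIdeal.primeCompl_le_nonZeroDivisors
  have hprimes : ∀ q : Ideal (Loc P), q ≠ ⊥ → q.IsPrime → q = maximalIdeal (Loc P) := by
    intro q hq0 hq
    have hcom : (q.comap (algebraMap R (Loc P))).IsPrime := hq.comap _
    have hle : q.comap (algebraMap R (Loc P)) ≤ P.1.asIdeal := by
      intro x hx
      by_contra hxP
      exact hq.ne_top (q.eq_top_of_isUnit_mem hx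
        (IsLocalization.map_units (M := P.1.asIdeal.primeCompl) (Loc P) ⟨x, hxP⟩))
    have hne : q.comap (algebraMap R (Loc P)) ≠ ⊥ := by
      intro h
      apply hq0
      rw [← IsLocalization.map_comap P.1.asIdeal.primeCompl (Loc P) q, Ideal.under_def, h, Ideal.map_bot]
    have := eq_of_le P hcom hne hle
    rw [← IsLocalization.map_comap P.1.asIdeal.primeCompl (Loc P) q, Ideal.under_def, this,
      Localization.AtPrime.map_eq_maximalIdeal]
  haveI : IsNoetherianRing (Loc P) :=
    IsLocalization.isNoetherianRing P.1.asIdeal.primeCompl (Loc P) inferInstance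
  have h4 := (tfae_of_isNoetherianRing_of_isLocalRing_of_isDomain (Loc P)).out 3 0
  haveI hPIR : IsPrincipalIdealRing (Loc P) := h4.mp ⟨hIC, fun q h1 h2 => hprimes q h1 h2⟩
  refine { toIsPrincipalIdealRing := hPIR, toIsLocalRing := inferInstance, not_a_field' := ?_ }
  rw [ne_eq, ← Localization.AtPrime.map_eq_maximalIdeal, Ideal.map_eq_bot_iff_of_injective
    (loc_inj P)]
  exact ne_bot P

lemma mem_maximalIdeal_pow_iff {x : Loc P} (n : ℕ) :
    x ∈ maximalIdeal (Loc P) ^ n ↔ (n : ℕ∞) ≤ IsDiscreteValuationRing.addVal (Loc P) x := by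
  obtain ⟨ϖ, hϖ⟩ := IsDiscreteValuationRing.exists_irreducible (Loc P)
  rw [hϖ.maximalIdeal_eq, Ideal.span_singleton_pow, Ideal.mem_span_singleton,
    ← IsDiscreteValuationRing.addVal_le_iff_dvd, hϖ.addVal_pow]

end HOP

end Aux2
section Aux3

open IsLocalRing

variable {R : Type*} [CommRing R] [IsDomain R] [IsNoetherianRing R] [IsIntegrallyClosed R]

namespace HOP

variable (P : HeightOnePrime R)

lemma ordAt_le_iff {a : R} (ha : a ≠ 0) (n : ℕ) :
    n ≤ ordAt R P.1 a ↔ algebraMap R (Loc P) a ∈ maximalIdeal (Loc P) ^ n := by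
  have hset : {m : ℕ | a ∈ (Ideal.map (algebraMap R (Localization.AtPrime P.1.asIdeal))
        (P.1.asIdeal ^ m)).comap (algebraMap R (Localization.AtPrime P.1.asIdeal))} =
      {m : ℕ | algebraMap R (Loc P) a ∈ maximalIdeal (Loc P) ^ m} := by
    ext m
    simp only [Set.mem_setOf_eq, Ideal.mem_comap, Ideal.map_pow,
      Localization.AtPrime.map_eq_maximalIdeal]
  have hdown : ∀ {j k : ℕ}, j ≤ k →
      algebraMap R (Loc P) a ∈ maximalIdeal (Loc P) ^ k →
      algebraMap R (Loc P) a ∈ maximalIdeal (Loc P) ^ j := by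
    intro j k hjk hk
    exact Ideal.pow_le_pow_right hjk hk
  have hbdd : BddAbove {m : ℕ | algebraMap R (Loc P) a ∈ maximalIdeal (Loc P) ^ m} := by
    have hnot : ∃ N : ℕ, algebraMap R (Loc P) a ∉ maximalIdeal (Loc P) ^ N := by
      by_contra hall
      push_neg at hall
      have : algebraMap R (Loc P) a ∈ (⊥ : Ideal (Loc P)) := by
        rw [← Ideal.iInf_pow_eq_bot_of_isLocalRing (maximalIdeal (Loc P))
          (Ideal.IsPrime.ne_top inferInstance)]
        exact Ideal.mem_iInf.mpr hall
      exact ha (loc_inj P (by simpa using this))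
    obtain ⟨N, hN⟩ := hnot
    refine ⟨N, fun k hk => ?_⟩
    by_contra hlt
    exact hN (hdown (le_of_not_ge hlt) hk)
  have h0 : (0 : ℕ) ∈ {m : ℕ | algebraMap R (Loc P) a ∈ maximalIdeal (Loc P) ^ m} := by
    simp
  show n ≤ sSup _ ↔ _
  rw [hset]
  constructor
  · intro hn
    exact hdown hn (Nat.sSup_mem ⟨0, h0⟩ hbdd)
  · intro hn
    exact le_csSup hbdd hn

lemma ordAt_cast {a : R} (ha : a ≠ 0) :
    (ordAt R P.1 a : ℕ∞) = IsDiscreteValuationRing.addVal (Loc P) (algebraMap R (Loc P) a) := by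
  have haL : algebraMap R (Loc P) a ≠ 0 := fun h => ha (loc_inj P (by simpa using h))
  have hne : IsDiscreteValuationRing.addVal (Loc P) (algebraMap R (Loc P) a) ≠ ⊤ :=
    fun h => haL (IsDiscreteValuationRing.addVal_eq_top_iff.mp h)
  refine le_antisymm ((mem_maximalIdeal_pow_iff P _).mp ((ordAt_le_iff P ha _).mp le_rfl)) ?_
  by_contra hlt
  push_neg at hlt
  have hle : ((ordAt R P.1 a + 1 : ℕ) : ℕ∞) ≤
      IsDiscreteValuationRing.addVal (Loc P) (algebraMap R (Loc P) a) := by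
    rw [Nat.cast_add, Nat.cast_one]
    exact (ENat.add_one_le_iff (by simp)).mpr hlt
  have := (ordAt_le_iff P ha _).mpr ((mem_maximalIdeal_pow_iff P _).mpr hle)
  omega

lemma ordAt_mul {a b : R} (ha : a ≠ 0) (hb : b ≠ 0) :
    ordAt R P.1 (a * b) = ordAt R P.1 a + ordAt R P.1 b := by
  have : ((ordAt R P.1 (a * b) : ℕ) : ℕ∞) = ((ordAt R P.1 a + ordAt R P.1 b : ℕ) : ℕ∞) := by
    rw [Nat.cast_add, ordAt_cast P (mul_ne_zero ha hb), ordAt_cast P ha, ordAt_cast P hb,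
      map_mul, IsDiscreteValuationRing.addVal_mul]
  exact_mod_cast this

lemma min_ordAt_le_add {x y : R} (hx : x ≠ 0) (hy : y ≠ 0) (hxy : x + y ≠ 0) :
    min (ordAt R P.1 x) (ordAt R P.1 y) ≤ ordAt R P.1 (x + y) := by
  rw [ordAt_le_iff P hxy]
  rw [map_add]
  exact Ideal.add_mem _
    (Ideal.pow_le_pow_right (min_le_left _ _) ((ordAt_le_iff P hx _).mp le_rfl))
    (Ideal.pow_le_pow_right (min_le_right _ _) ((ordAt_le_iff P hy _).mp le_rfl))

lemma ordAt_eq_zero_of_not_mem {b : R} (hb : b ≠ 0) (h : b ∉ P.1.asIdeal) :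
    ordAt R P.1 b = 0 := by
  by_contra hne
  have h1 : 1 ≤ ordAt R P.1 b := Nat.one_le_iff_ne_zero.mpr hne
  rw [ordAt_le_iff P hb, pow_one] at h1
  exact h (by rw [← Localization.AtPrime.comap_maximalIdeal (I := P.1.asIdeal)]; exact h1)

lemma ordAt_one : ordAt R P.1 1 = 0 :=
  ordAt_eq_zero_of_not_mem P one_ne_zero
    (fun h => P.1.isPrime.ne_top ((Ideal.eq_top_iff_one _).mpr h))

lemma le_ordAt_of_mem_pow {a : R} {n : ℕ} (ha : a ≠ 0) (h : a ∈ P.1.asIdeal ^ n) :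
    n ≤ ordAt R P.1 a := by
  rw [ordAt_le_iff P ha]
  rw [← Localization.AtPrime.map_eq_maximalIdeal (I := P.1.asIdeal), ← Ideal.map_pow]
  exact Ideal.mem_map_of_mem _ h

end HOP

end Aux3
section Aux4

open IsLocalRing

variable {R : Type*} [CommRing R] [IsDomain R] [IsNoetherianRing R] [IsIntegrallyClosed R]
variable {K : Type*} [Field K] [Algebra R K] [IsFractionRing R K]

namespace HOP

lemma mapK_ne_zero {b : R} (hb : b ≠ 0) : algebraMap R K b ≠ 0 :=
  (map_ne_zero_iff _ (IsFractionRing.injective R K)).mpr hb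

lemma exists_rep (f : K) : ∃ a s : R, s ≠ 0 ∧ f * algebraMap R K s = algebraMap R K a := by
  obtain ⟨⟨a, s⟩, h⟩ := IsLocalization.surj (nonZeroDivisors R) f
  exact ⟨a, s.1, nonZeroDivisors.ne_zero s.2, h⟩

lemma num_ne_zero {f : K} (hf : f ≠ 0) {a b : R} (hb : b ≠ 0)
    (h : f * algebraMap R K b = algebraMap R K a) : a ≠ 0 := by
  rintro rfl
  rw [map_zero, mul_eq_zero] at h
  rcases h with h | h
  · exact hf h
  · exact mapK_ne_zero hb h

variable (P : HeightOnePrime R)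

lemma valAt_spec {f : K} (hf : f ≠ 0) {a b : R} (hb : b ≠ 0)
    (h : f * algebraMap R K b = algebraMap R K a) :
    valAt R K P.1 f = (ordAt R P.1 a : ℤ) - (ordAt R P.1 b : ℤ) := by
  have hex : ∃ ab : R × R, ab.2 ≠ 0 ∧ f * algebraMap R K ab.2 = algebraMap R K ab.1 :=
    ⟨(a, b), hb, h⟩
  rw [valAt, dif_pos hex]
  obtain ⟨hb₀, h₀⟩ := hex.choose_spec
  have ha : a ≠ 0 := num_ne_zero hf hb h
  have ha₀ : hex.choose.1 ≠ 0 := num_ne_zero hf hb₀ h₀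
  have hcross : a * hex.choose.2 = hex.choose.1 * b := by
    apply IsFractionRing.injective R K
    rw [map_mul, map_mul, ← h, ← h₀]
    ring
  have hord := congrArg (ordAt R P.1) hcross
  rw [ordAt_mul P ha hb₀, ordAt_mul P ha₀ hb] at hord
  omega

lemma valAt_mul {f g : K} (hf : f ≠ 0) (hg : g ≠ 0) :
    valAt R K P.1 (f * g) = valAt R K P.1 f + valAt R K P.1 g := by
  obtain ⟨a, s, hs, hfs⟩ := exists_rep (R := R) f
  obtain ⟨b, t, ht, hgt⟩ := exists_rep (R := R) g
  have ha : a ≠ 0 := num_ne_zero hf hs hfs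
  have hb : b ≠ 0 := num_ne_zero hg ht hgt
  have hrep : (f * g) * algebraMap R K (s * t) = algebraMap R K (a * b) := by
    rw [map_mul, map_mul]
    rw [show f * g * (algebraMap R K s * algebraMap R K t) =
      (f * algebraMap R K s) * (g * algebraMap R K t) by ring, hfs, hgt]
  rw [valAt_spec P (mul_ne_zero hf hg) (mul_ne_zero hs ht) hrep,
    valAt_spec P hf hs hfs, valAt_spec P hg ht hgt,
    ordAt_mul P ha hb, ordAt_mul P hs ht]
  push_cast
  ring

lemma valAt_algebraMap {a : R} (ha : a ≠ 0) :
    valAt R K P.1 (algebraMap R K a) = (ordAt R P.1 a : ℤ) := by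
  have h : algebraMap R K a * algebraMap R K 1 = algebraMap R K a := by
    rw [map_one, mul_one]
  rw [valAt_spec P (mapK_ne_zero ha) one_ne_zero h, ordAt_one]
  simp

lemma min_valAt_le_add {f g : K} (hf : f ≠ 0) (hg : g ≠ 0) (hfg : f + g ≠ 0) :
    min (valAt R K P.1 f) (valAt R K P.1 g) ≤ valAt R K P.1 (f + g) := by
  obtain ⟨a, s, hs, hfs⟩ := exists_rep (R := R) f
  obtain ⟨b, t, ht, hgt⟩ := exists_rep (R := R) g
  have ha : a ≠ 0 := num_ne_zero hf hs hfs
  have hb : b ≠ 0 := num_ne_zero hg ht hgt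
  have hrep : (f + g) * algebraMap R K (s * t) = algebraMap R K (a * t + b * s) := by
    rw [map_mul, map_add, map_mul, map_mul]
    rw [add_mul]
    rw [show f * (algebraMap R K s * algebraMap R K t) =
      (f * algebraMap R K s) * algebraMap R K t by ring, hfs]
    rw [show g * (algebraMap R K s * algebraMap R K t) =
      (g * algebraMap R K t) * algebraMap R K s by ring, hgt]
  have hsum : a * t + b * s ≠ 0 := num_ne_zero hfg (mul_ne_zero hs ht) hrep
  have hmin := min_ordAt_le_add P (mul_ne_zero ha ht) (mul_ne_zero hb hs) hsum
  rw [ordAt_mul P ha ht, ordAt_mul P hb hs] at hmin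
  rw [valAt_spec P hfg (mul_ne_zero hs ht) hrep, valAt_spec P hf hs hfs,
    valAt_spec P hg ht hgt, ordAt_mul P hs ht]
  omega

end HOP

end Aux4
section Aux5

variable {R : Type*} [CommRing R] [IsDomain R] [IsNoetherianRing R] [IsIntegrallyClosed R]
variable {K : Type*} [Field K] [Algebra R K] [IsFractionRing R K]

namespace HOP

/-- The divisorial set as a submodule. -/
def divSub (D : WeilDivisor R) : Submodule R K where
  carrier := divisorialSet R K D
  zero_mem' := Or.inl rfl
  add_mem' := by
    intro f g hf hg
    by_cases hf0 : f = 0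
    · rwa [hf0, zero_add]
    by_cases hg0 : g = 0
    · rwa [hg0, add_zero]
    by_cases hfg : f + g = 0
    · exact Or.inl hfg
    right
    intro P
    have hvf := hf.resolve_left hf0 P
    have hvg := hg.resolve_left hg0 P
    have hmin := min_valAt_le_add P hf0 hg0 hfg
    rcases le_total (valAt R K P.1 f) (valAt R K P.1 g) with h | h
    · rw [min_eq_left h] at hmin; omega
    · rw [min_eq_right h] at hmin; omega
  smul_mem' := by
    intro r f hf
    by_cases hr : r = 0
    · exact Or.inl (by rw [hr, zero_smul])
    by_cases hf0 : f = 0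
    · exact Or.inl (by rw [hf0, smul_zero])
    right
    intro P
    have hvf := hf.resolve_left hf0 P
    show 0 ≤ valAt R K P.1 (r • f) + D P
    rw [Algebra.smul_def, valAt_mul P (mapK_ne_zero hr) hf0, valAt_algebraMap P hr]
    have : (0 : ℤ) ≤ (ordAt R P.1 r : ℤ) := Int.ofNat_nonneg _
    omega

lemma mem_divisorialIdeal_iff (D : WeilDivisor R) (f : K) :
    f ∈ divisorialIdeal R K D ↔
      (f = 0 ∨ ∀ P : HeightOnePrime R, 0 ≤ valAt R K P.1 f + D P) := by
  have : divisorialIdeal R K D = divSub (R := R) (K := K) D := by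
    rw [divisorialIdeal]
    exact Submodule.span_eq (divSub D)
  rw [this]
  exact Iff.rfl

end HOP

end Aux5
section Aux6

open IsLocalRing

variable {R : Type*} [CommRing R] [IsDomain R] [IsNoetherianRing R] [IsIntegrallyClosed R]
variable {K : Type*} [Field K] [Algebra R K] [IsFractionRing R K]

namespace HOP

lemma heightOnePrime_ext {P Q : HeightOnePrime R} (h : P.1.asIdeal = Q.1.asIdeal) : P = Q :=
  Subtype.ext (PrimeSpectrum.ext h)

lemma exists_elem_ord_ge (c : HeightOnePrime R →₀ ℕ) :
    ∃ b : R, b ≠ 0 ∧ ∀ P : HeightOnePrime R, c P ≤ ordAt R P.1 b := by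
  have hpick : ∀ P : HeightOnePrime R, ∃ x : R, x ∈ P.1.asIdeal ∧ x ≠ 0 :=
    fun P => Submodule.exists_mem_ne_zero_of_ne_bot (ne_bot P)
  choose x hx hx0 using hpick
  refine ⟨∏ P ∈ c.support, x P ^ c P, ?_, ?_⟩
  · exact Finset.prod_ne_zero_iff.mpr fun P _ => pow_ne_zero _ (hx0 P)
  · intro P
    by_cases hP : P ∈ c.support
    · apply le_ordAt_of_mem_pow P (Finset.prod_ne_zero_iff.mpr fun Q _ => pow_ne_zero _ (hx0 Q))
      rw [← Finset.mul_prod_erase _ _ hP]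
      exact Ideal.mul_mem_right _ _ (Ideal.pow_mem_pow (hx P) _)
    · rw [Finsupp.notMem_support_iff.mp hP]
      exact Nat.zero_le _

lemma finite_mem_primes {b : R} (hb : b ≠ 0) :
    {Q : HeightOnePrime R | b ∈ Q.1.asIdeal}.Finite := by
  have hfin : ((Ideal.span {b} : Ideal R).minimalPrimes).Finite := by
    rw [Ideal.minimalPrimes_eq_comap]
    exact Set.Finite.image _ (minimalPrimes.finite_of_isNoetherianRing _)
  refine Set.Finite.of_finite_image (f := fun Q => Q.1.asIdeal) (hfin.subset ?_) ?_
  · rintro I ⟨Q, hQ, rfl⟩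
    have hle : Ideal.span {b} ≤ Q.1.asIdeal := by
      rwa [Ideal.span_singleton_le_iff_mem]
    obtain ⟨p, hp, hple⟩ := Ideal.exists_minimalPrimes_le hle
    have hp0 : p ≠ ⊥ := by
      intro h
      apply hb
      have : b ∈ p := hp.1.2 (Ideal.subset_span rfl)
      rwa [h, Ideal.mem_bot] at this
    have heq := eq_of_le Q hp.1.1 hp0 hple
    show Q.1.asIdeal ∈ _
    rw [← heq]
    exact hp
  · intro Q _ Q' _ h
    exact heightOnePrime_ext h

lemma exists_elem_exact (S' : Finset (HeightOnePrime R)) (n : HeightOnePrime R → ℕ)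
    (P₀ : HeightOnePrime R) (hP₀ : P₀ ∈ S') :
    ∃ a : R, a ≠ 0 ∧ (∀ Q ∈ S', n Q ≤ ordAt R Q.1 a) ∧ ordAt R P₀.1 a = n P₀ := by
  set L := Loc P₀
  set J : Ideal R := ∏ Q ∈ S', Q.1.asIdeal ^ n Q with hJ
  have hJle : ∀ Q ∈ S', J ≤ Q.1.asIdeal ^ n Q := by
    intro Q hQ
    rw [hJ, ← Finset.mul_prod_erase _ _ hQ]
    exact Ideal.mul_le_left
  have hclaim : ¬ ∀ z ∈ J, algebraMap R L z ∈ maximalIdeal L ^ (n P₀ + 1) := by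
    intro hall
    have hmaple : Ideal.map (algebraMap R L) J ≤ maximalIdeal L ^ (n P₀ + 1) :=
      Ideal.map_le_iff_le_comap.mpr fun z hz => hall z hz
    have hmapJ : Ideal.map (algebraMap R L) J = maximalIdeal L ^ n P₀ := by
      let φ : Ideal R →* Ideal L :=
        { toFun := Ideal.map (algebraMap R L)
          map_one' := by rw [Ideal.one_eq_top, Ideal.one_eq_top, Ideal.map_top]
          map_mul' := fun I₁ I₂ => Ideal.map_mul _ I₁ I₂ }
      show φ J = _
      rw [hJ, map_prod φ]
      have : ∀ Q ∈ S', Q ≠ P₀ → φ (Q.1.asIdeal ^ n Q) = 1 := by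
        intro Q _ hQne
        have hnle : ¬ Q.1.asIdeal ≤ P₀.1.asIdeal := by
          intro hle
          exact hQne (heightOnePrime_ext (eq_of_le P₀ Q.1.isPrime (ne_bot Q) hle))
        obtain ⟨q, hqQ, hqP⟩ := SetLike.not_le_iff_exists.mp hnle
        have : φ Q.1.asIdeal = ⊤ :=
          Ideal.eq_top_of_isUnit_mem _ (Ideal.mem_map_of_mem _ hqQ)
            (IsLocalization.map_units (M := P₀.1.asIdeal.primeCompl) L ⟨q, hqP⟩)
        show Ideal.map (algebraMap R L) (Q.1.asIdeal ^ n Q) = 1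
        rw [Ideal.map_pow, show Ideal.map (algebraMap R L) Q.1.asIdeal = ⊤ from this,
          Ideal.top_pow, Ideal.one_eq_top]
      rw [Finset.prod_eq_single_of_mem P₀ hP₀ this]
      show Ideal.map (algebraMap R L) (P₀.1.asIdeal ^ n P₀) = _
      rw [Ideal.map_pow, Localization.AtPrime.map_eq_maximalIdeal]
    rw [hmapJ] at hmaple
    obtain ⟨ϖ, hϖ⟩ := IsDiscreteValuationRing.exists_irreducible L
    have hϖm : ϖ ∈ maximalIdeal L := hϖ.not_isUnit
    have hmem : ϖ ^ n P₀ ∈ maximalIdeal L ^ (n P₀ + 1) :=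
      hmaple (Ideal.pow_mem_pow hϖm _)
    rw [mem_maximalIdeal_pow_iff, hϖ.addVal_pow, Nat.cast_le] at hmem
    omega
  push_neg at hclaim
  obtain ⟨a, haJ, haN⟩ := hclaim
  have ha0 : a ≠ 0 := by
    rintro rfl
    exact haN (by rw [map_zero]; exact Ideal.zero_mem _)
  refine ⟨a, ha0, fun Q hQ => le_ordAt_of_mem_pow Q ha0 (hJle Q hQ haJ), ?_⟩
  have h1 : n P₀ ≤ ordAt R P₀.1 a :=
    le_ordAt_of_mem_pow P₀ ha0 (hJle P₀ hP₀ haJ)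
  have h2 : ¬ (n P₀ + 1 ≤ ordAt R P₀.1 a) := by
    intro h
    exact haN ((ordAt_le_iff P₀ ha0 _).mp h)
  omega

lemma exists_exact_val (D : WeilDivisor R) (P₀ : HeightOnePrime R) :
    ∃ f : K, f ≠ 0 ∧ (∀ P : HeightOnePrime R, 0 ≤ valAt R K P.1 f + D P) ∧
      valAt R K P₀.1 f + D P₀ = 0 := by
  classical
  obtain ⟨b, hb0, hbc⟩ := exists_elem_ord_ge (Finsupp.mapRange Int.toNat Int.toNat_zero D)
  have hbD : ∀ P : HeightOnePrime R, (D P : ℤ) ≤ (ordAt R P.1 b : ℤ) := by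
    intro P
    have := hbc P
    rw [Finsupp.mapRange_apply] at this
    have h2 : (D P : ℤ) ≤ ((D P).toNat : ℤ) := Int.self_le_toNat _
    omega
  have hT := finite_mem_primes (R := R) hb0
  set S' : Finset (HeightOnePrime R) := (D.support ∪ {P₀}) ∪ hT.toFinset with hS'
  set n : HeightOnePrime R → ℕ := fun Q => ((ordAt R Q.1 b : ℤ) - D Q).toNat with hn
  have hP₀S : P₀ ∈ S' := by simp [hS']
  obtain ⟨a, ha0, haS, haP₀⟩ := exists_elem_exact S' n P₀ hP₀S
  have hf0 : algebraMap R K a / algebraMap R K b ≠ 0 :=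
    div_ne_zero (mapK_ne_zero ha0) (mapK_ne_zero hb0)
  have hrep : (algebraMap R K a / algebraMap R K b) * algebraMap R K b = algebraMap R K a :=
    div_mul_cancel₀ _ (mapK_ne_zero hb0)
  have hval : ∀ P : HeightOnePrime R, valAt R K P.1 (algebraMap R K a / algebraMap R K b) =
      (ordAt R P.1 a : ℤ) - (ordAt R P.1 b : ℤ) :=
    fun P => valAt_spec P hf0 hb0 hrep
  refine ⟨algebraMap R K a / algebraMap R K b, hf0, ?_, ?_⟩
  · intro P
    rw [hval P]
    by_cases hPS : P ∈ S'
    · have h1 := haS P hPS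
      have h2 : ((ordAt R P.1 b : ℤ) - D P) ≤ ((n P : ℕ) : ℤ) := by
        simp only [hn]
        exact Int.self_le_toNat _
      omega
    · have hDP : D P = 0 := by
        refine Finsupp.notMem_support_iff.mp fun h => hPS ?_
        simp only [hS', Finset.mem_union, Finset.mem_singleton]
        exact Or.inl (Or.inl h)
      have hbP : b ∉ P.1.asIdeal := by
        intro h
        apply hPS
        simp only [hS', Finset.mem_union, Set.Finite.mem_toFinset]
        exact Or.inr h
      rw [hDP, ordAt_eq_zero_of_not_mem P hb0 hbP]
      have : 0 ≤ (ordAt R P.1 a : ℤ) := Int.ofNat_nonneg _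
      omega
  · rw [hval P₀, haP₀]
    have h3 := hbD P₀
    have h5 : ((n P₀ : ℕ) : ℤ) = (ordAt R P₀.1 b : ℤ) - D P₀ := by
      simp only [hn]
      exact Int.toNat_of_nonneg (by omega)
    omega


end HOP

end Aux6
section Aux7

variable {R : Type*} [CommRing R] [IsDomain R] [IsNoetherianRing R] [IsIntegrallyClosed R]
variable {K : Type*} [Field K] [Algebra R K] [IsFractionRing R K]

namespace HOP

lemma exists_nonzero_mem (D : WeilDivisor R) :
    ∃ x : K, x ∈ divisorialIdeal R K D ∧ x ≠ 0 := by
  rcases isEmpty_or_nonempty (HeightOnePrime R) with hE | hN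
  · exact ⟨1, (mem_divisorialIdeal_iff D 1).mpr (Or.inr fun P => isEmptyElim P), one_ne_zero⟩
  · obtain ⟨P₀⟩ := hN
    obtain ⟨f, hf0, hfall, -⟩ := exists_exact_val (K := K) D P₀
    exact ⟨f, (mem_divisorialIdeal_iff D f).mpr (Or.inr hfall), hf0⟩

lemma sub_apply' (D₁ D₂ : WeilDivisor R) (P : HeightOnePrime R) :
    (D₂ - D₁) P = D₂ P - D₁ P := by
  simp [Finsupp.sub_apply]

lemma mem_sub_iff_mul_mem (D₁ D₂ : WeilDivisor R) (f : K) :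
    f ∈ divisorialIdeal R K (D₂ - D₁) ↔
      ∀ x ∈ divisorialIdeal R K D₁, f * x ∈ divisorialIdeal R K D₂ := by
  constructor
  · intro hf x hx
    rw [mem_divisorialIdeal_iff] at hf hx ⊢
    by_cases hf0 : f = 0
    · exact Or.inl (by rw [hf0, zero_mul])
    by_cases hx0 : x = 0
    · exact Or.inl (by rw [hx0, mul_zero])
    right
    intro P
    have h1 := hf.resolve_left hf0 P
    have h2 := hx.resolve_left hx0 P
    rw [sub_apply'] at h1
    rw [valAt_mul P hf0 hx0]
    omega
  · intro h
    rw [mem_divisorialIdeal_iff]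
    by_cases hf0 : f = 0
    · exact Or.inl hf0
    right
    intro P
    obtain ⟨x, hx0, hxall, hxP⟩ := exists_exact_val (K := K) D₁ P
    have hxmem : x ∈ divisorialIdeal R K D₁ :=
      (mem_divisorialIdeal_iff D₁ x).mpr (Or.inr hxall)
    have hfx := h x hxmem
    rw [mem_divisorialIdeal_iff] at hfx
    have h2 := (hfx.resolve_left (mul_ne_zero hf0 hx0)) P
    rw [valAt_mul P hf0 hx0] at h2
    rw [sub_apply']
    omega

end HOP

end Aux7
-- STATEMENT 1
theorem stmt1 (R : Type*) [CommRing R] [IsDomain R] [IsNoetherianRing R] [IsIntegrallyClosed R]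
    (K : Type*) [Field K] [Algebra R K] [IsFractionRing R K] (D₁ D₂ : WeilDivisor R) :
    Nonempty ((divisorialIdeal R K D₁ →ₗ[R] divisorialIdeal R K D₂) ≃ₗ[R]
      divisorialIdeal R K (D₂ - D₁)) := by
  obtain ⟨x₀, hx₀I, hx₀⟩ := HOP.exists_nonzero_mem (K := K) D₁
  have claim : ∀ (φ : divisorialIdeal R K D₁ →ₗ[R] divisorialIdeal R K D₂)
      (x : K) (hx : x ∈ divisorialIdeal R K D₁),
      ((φ ⟨x₀, hx₀I⟩ : divisorialIdeal R K D₂) : K) * x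
        = ((φ ⟨x, hx⟩ : divisorialIdeal R K D₂) : K) * x₀ := by
    intro φ x hx
    obtain ⟨r, s, hs, hrs⟩ := HOP.exists_rep (R := R) (x / x₀)
    rw [div_mul_eq_mul_div, div_eq_iff hx₀] at hrs
    have hsx : algebraMap R K s * x = algebraMap R K r * x₀ := by
      rw [mul_comm (algebraMap R K s) x]
      exact hrs
    have hmod : s • (⟨x, hx⟩ : divisorialIdeal R K D₁) = r • ⟨x₀, hx₀I⟩ := by
      apply Subtype.ext
      show s • x = r • x₀
      rw [Algebra.smul_def, Algebra.smul_def]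
      exact hsx
    have happ := congrArg φ hmod
    rw [map_smul, map_smul] at happ
    have hK : algebraMap R K s * ((φ ⟨x, hx⟩ : divisorialIdeal R K D₂) : K)
        = algebraMap R K r * ((φ ⟨x₀, hx₀I⟩ : divisorialIdeal R K D₂) : K) := by
      have h2 := congrArg (fun y : divisorialIdeal R K D₂ => (y : K)) happ
      simpa [Algebra.smul_def] using h2
    apply mul_left_cancel₀ (HOP.mapK_ne_zero (K := K) hs)
    calc algebraMap R K s * (((φ ⟨x₀, hx₀I⟩ : divisorialIdeal R K D₂) : K) * x)
        = ((φ ⟨x₀, hx₀I⟩ : divisorialIdeal R K D₂) : K) * (algebraMap R K s * x) := by ring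
      _ = ((φ ⟨x₀, hx₀I⟩ : divisorialIdeal R K D₂) : K) * (algebraMap R K r * x₀) := by rw [hsx]
      _ = (algebraMap R K r * ((φ ⟨x₀, hx₀I⟩ : divisorialIdeal R K D₂) : K)) * x₀ := by ring
      _ = (algebraMap R K s * ((φ ⟨x, hx⟩ : divisorialIdeal R K D₂) : K)) * x₀ := by rw [hK]
      _ = algebraMap R K s * (((φ ⟨x, hx⟩ : divisorialIdeal R K D₂) : K) * x₀) := by ring
  have memA : ∀ (φ : divisorialIdeal R K D₁ →ₗ[R] divisorialIdeal R K D₂),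
      ((φ ⟨x₀, hx₀I⟩ : divisorialIdeal R K D₂) : K) / x₀ ∈ divisorialIdeal R K (D₂ - D₁) := by
    intro φ
    rw [HOP.mem_sub_iff_mul_mem]
    intro x hx
    have : ((φ ⟨x₀, hx₀I⟩ : divisorialIdeal R K D₂) : K) / x₀ * x
        = ((φ ⟨x, hx⟩ : divisorialIdeal R K D₂) : K) := by
      rw [div_mul_eq_mul_div, claim φ x hx, mul_div_assoc, div_self hx₀, mul_one]
    rw [this]
    exact (φ ⟨x, hx⟩).2
  let A : (divisorialIdeal R K D₁ →ₗ[R] divisorialIdeal R K D₂) →ₗ[R]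
      divisorialIdeal R K (D₂ - D₁) :=
    { toFun := fun φ => ⟨((φ ⟨x₀, hx₀I⟩ : divisorialIdeal R K D₂) : K) / x₀, memA φ⟩
      map_add' := by
        intro φ ψ
        apply Subtype.ext
        show ((((φ + ψ) ⟨x₀, hx₀I⟩ : divisorialIdeal R K D₂)) : K) / x₀ = _
        rw [LinearMap.add_apply, Submodule.coe_add, add_div]
        rfl
      map_smul' := by
        intro r φ
        apply Subtype.ext
        show ((((r • φ) ⟨x₀, hx₀I⟩ : divisorialIdeal R K D₂)) : K) / x₀ = _
        rw [LinearMap.smul_apply, Submodule.coe_smul]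
        show r • ((φ ⟨x₀, hx₀I⟩ : divisorialIdeal R K D₂) : K) / x₀ = _
        rw [smul_div_assoc]
        rfl }
  let B : divisorialIdeal R K (D₂ - D₁) →ₗ[R]
      (divisorialIdeal R K D₁ →ₗ[R] divisorialIdeal R K D₂) :=
    { toFun := fun f =>
        { toFun := fun x => ⟨(f : K) * (x : K),
            (HOP.mem_sub_iff_mul_mem D₁ D₂ (f : K)).mp f.2 (x : K) x.2⟩
          map_add' := by
            intro x y
            apply Subtype.ext
            show (f : K) * ((x : K) + (y : K)) = (f : K) * x + (f : K) * y
            ring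
          map_smul' := by
            intro r x
            apply Subtype.ext
            show (f : K) * (r • (x : K)) = r • ((f : K) * x)
            rw [Algebra.smul_def, Algebra.smul_def]
            ring }
      map_add' := by
        intro f g
        apply LinearMap.ext
        intro x
        apply Subtype.ext
        show ((f : K) + g) * x = (f : K) * x + (g : K) * x
        ring
      map_smul' := by
        intro r f
        apply LinearMap.ext
        intro x
        apply Subtype.ext
        show (r • (f : K)) * x = r • ((f : K) * (x : K))
        rw [Algebra.smul_def, Algebra.smul_def]
        ring }
  refine ⟨LinearEquiv.ofLinear A B ?_ ?_⟩
  · apply LinearMap.ext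
    intro f
    apply Subtype.ext
    show (f : K) * x₀ / x₀ = (f : K)
    exact mul_div_cancel_right₀ _ hx₀
  · apply LinearMap.ext
    intro φ
    apply LinearMap.ext
    intro x
    apply Subtype.ext
    show ((φ ⟨x₀, hx₀I⟩ : divisorialIdeal R K D₂) : K) / x₀ * (x : K)
        = ((φ x : divisorialIdeal R K D₂) : K)
    rw [div_mul_eq_mul_div, claim φ (x : K) x.2, mul_div_assoc, div_self hx₀, mul_one]
end

section
/- Let (R, m, k) be a local normal domain, C a finitely generated (S₂) R-module, M a rank-1 module, and suppose C ≅ M^⊕a₁ ⊕ N₁ ≅ M^⊕a₂ ⊕ N₂ are direct sum decompositions such that M is not a direct summand of N₁ or of N₂. Then a₁ = a₂. -/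
open Classical TensorProduct

open Filter MvPolynomial

theorem torsionfree_of_isS2 {R : Type*} [CommRing R] [IsDomain R] [IsNoetherianRing R]
    {C : Type*} [AddCommGroup C] [Module R C] (hC : IsS2 R C)
    (r : R) (c : C) (hr : r ≠ 0) (hrc : r • c = 0) : c = 0 := by
  by_contra hc
  obtain ⟨P, hP, hle⟩ := exists_le_isAssociatedPrime_of_isNoetherianRing R c hc
  obtain ⟨hPprime, y, hy⟩ := isAssociatedPrime_iff.1 hP
  have hrP : r ∈ P := hle (Submodule.mem_colon_singleton.2 ((Submodule.mem_bot R).2 hrc))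
  haveI := hPprime
  have h := hC ⟨P, hPprime⟩
  set Rp := Localization.AtPrime P with hRp
  -- the Krull dimension of the localization is at least 1
  have hinj : Function.Injective (algebraMap R Rp) :=
    IsLocalization.injective Rp P.primeCompl_le_nonZeroDivisors
  have hmax_ne : IsLocalRing.maximalIdeal Rp ≠ ⊥ := by
    rw [Submodule.ne_bot_iff]
    refine ⟨algebraMap R Rp r, ?_, fun h0 => hr (hinj (by rw [h0, map_zero]))⟩
    have : r ∈ Ideal.comap (algebraMap R Rp) (IsLocalRing.maximalIdeal Rp) := by
      rw [show Ideal.comap (algebraMap R Rp) (IsLocalRing.maximalIdeal Rp) = P from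
        Localization.AtPrime.comap_maximalIdeal]; exact hrP
    exact this
  have hdim : (1 : WithBot ℕ∞) ≤ ringKrullDim Rp := by
    let x0 : PrimeSpectrum Rp := ⟨⊥, Ideal.bot_prime⟩
    let x1 : PrimeSpectrum Rp :=
      ⟨IsLocalRing.maximalIdeal Rp, (IsLocalRing.maximalIdeal.isMaximal Rp).isPrime⟩
    have hlt : x0 < x1 := by
      apply lt_of_le_of_ne
      · show x0.asIdeal ≤ x1.asIdeal
        exact bot_le
      · intro hEq
        exact hmax_ne (congrArg PrimeSpectrum.asIdeal hEq).symm
    let ch : LTSeries (PrimeSpectrum Rp) := (RelSeries.singleton _ x0).snoc x1 hlt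
    have hlen := Order.LTSeries.length_le_krullDim ch
    have : ch.length = 1 := rfl
    rw [this] at hlen
    exact_mod_cast hlen
  -- the depth of the localized module is 0
  have hdepth : depthIn Rp (IsLocalRing.maximalIdeal Rp)
      (LocalizedModule P.primeCompl C) ≤ 0 := by
    apply sSup_le
    rintro n ⟨rs, hlen, hmem, hreg⟩
    match rs, hlen with
    | [], hlen => simpa using hlen.symm.le
    | x :: rest, hlen =>
      exfalso
      have hreg1 : IsSMulRegular (LocalizedModule P.primeCompl C) x :=
        ((RingTheory.Sequence.isWeaklyRegular_cons_iff _ _ _).1 hreg.toIsWeaklyRegular).1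
      have hx : x ∈ IsLocalRing.maximalIdeal Rp := hmem x (by simp)
      obtain ⟨⟨aa, s⟩, rfl⟩ := IsLocalization.mk'_surjective P.primeCompl x
      have haP : aa ∈ P := by
        by_contra haa
        exact hx ((IsLocalization.AtPrime.isUnit_mk'_iff Rp P aa s).2 haa)
      set w : LocalizedModule P.primeCompl C := LocalizedModule.mk y 1 with hwdef
      have hw : w ≠ 0 := by
        intro h0
        rw [hwdef, show (0 : LocalizedModule P.primeCompl C) = LocalizedModule.mk 0 1 from
          (LocalizedModule.zero_mk 1).symm, LocalizedModule.mk_eq] at h0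
        obtain ⟨u, hu⟩ := h0
        simp only [one_smul, smul_zero] at hu
        have h2 : (u : R) ∈ (⊥ : Submodule R C).colon {y} :=
          Submodule.mem_colon_singleton.2 ((Submodule.mem_bot R).2 hu)
        rw [← hy] at h2
        exact u.2 h2
      have hay : aa • y = 0 := by
        have h3 : aa ∈ (⊥ : Submodule R C).colon {y} := by
          rw [← hy]; exact haP
        exact (Submodule.mem_bot R).1 (Submodule.mem_colon_singleton.1 h3)
      have hxw : IsLocalization.mk' Rp aa s • w = 0 := by
        rw [hwdef]
        have hkey : IsLocalization.mk' Rp aa s • (LocalizedModule.mk y 1 :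
            LocalizedModule P.primeCompl C) = LocalizedModule.mk (aa • y) (s * 1) :=
          by rw [← Localization.mk_eq_mk'_apply]; exact LocalizedModule.mk_smul_mk aa y s 1
        rw [hkey, hay, LocalizedModule.zero_mk]
      apply hw
      apply hreg1
      show IsLocalization.mk' Rp aa s • w =
        IsLocalization.mk' Rp aa s • (0 : LocalizedModule P.primeCompl C)
      rw [hxw, smul_zero]
  -- combine
  have h1 : (1 : WithBot ℕ∞) ≤ min 2 (ringKrullDim Rp) := by
    refine le_min ?_ hdim
    norm_num
  have h0 : ((depthIn Rp (IsLocalRing.maximalIdeal Rp)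
      (LocalizedModule P.primeCompl C) : ℕ∞) : WithBot ℕ∞) ≤ (0 : WithBot ℕ∞) := by
    exact_mod_cast hdepth
  have := le_trans (le_trans h1 h) h0
  norm_num at this

theorem end_bijective {R : Type*} [CommRing R] [IsDomain R] [IsIntegrallyClosed R]
    {M : Type*} [AddCommGroup M] [Module R M] [Module.Finite R M]
    (htf : ∀ (r : R) (m : M), r ≠ 0 → r • m = 0 → m = 0)
    (hM : genRank R M = 1) :
    Function.Bijective (algebraMap R (Module.End R M)) := by
  classical
  set K := FractionRing R with hK
  set L := LocalizedModule (nonZeroDivisors R) M with hL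
  set ι : M →ₗ[R] L := LocalizedModule.mkLinearMap (nonZeroDivisors R) M with hι0
  have hfin : Module.finrank K L = 1 := hM
  have hι : Function.Injective ι := by
    intro m m' hmm'
    have h0 : ι (m - m') = 0 := by rw [map_sub, hmm', sub_self]
    have h1 : LocalizedModule.mk (m - m') (1 : nonZeroDivisors R) = 0 := h0
    rw [show (0 : L) = LocalizedModule.mk 0 1 from (LocalizedModule.zero_mk 1).symm,
      LocalizedModule.mk_eq] at h1
    obtain ⟨u, hu⟩ := h1
    simp only [one_smul, smul_zero] at hu
    have hu0 : (u : R) ≠ 0 := nonZeroDivisors.coe_ne_zero u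
    have := htf u (m - m') hu0 hu
    exact sub_eq_zero.1 this
  have hMnt : Nontrivial M := by
    rcases subsingleton_or_nontrivial M with hs | hnt
    · exfalso
      haveI : Subsingleton L := by
        constructor
        intro x y
        have hz : ∀ z : L, z = 0 := by
          intro z
          induction z using LocalizedModule.induction_on with
          | h m s => rw [Subsingleton.elim m (0 : M)]; exact LocalizedModule.zero_mk s
        rw [hz x, hz y]
      rw [Module.finrank_zero_of_subsingleton] at hfin
      exact one_ne_zero hfin.symm
    · exact hnt
  obtain ⟨m₀, hm₀⟩ := exists_ne (0 : M)
  have hv₀ : ι m₀ ≠ 0 := fun h => hm₀ (hι (by rw [h, map_zero]))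
  have hspan : ∀ w : L, ∃ cK : K, cK • ι m₀ = w :=
    (finrank_eq_one_iff_of_nonzero' (ι m₀) hv₀).1 hfin
  have halg : Function.Injective (algebraMap R K) :=
    IsFractionRing.injective R K
  constructor
  · intro r r' hrr'
    by_contra hne
    have h0 : (r - r') • m₀ = 0 := by
      have := congrArg (fun φ : Module.End R M => φ m₀) hrr'
      simp only [Module.algebraMap_end_apply] at this
      rw [sub_smul, this, sub_self]
    exact hm₀ (htf (r - r') m₀ (sub_ne_zero.2 hne) h0)
  · intro φ
    obtain ⟨x, hx⟩ := hspan (ι (φ m₀))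
    have hcomm : ∀ m : M, ι (φ m) = x • ι m := by
      intro m
      obtain ⟨cK, hc⟩ := hspan (ι m)
      obtain ⟨⟨a, s⟩, hsec⟩ := IsLocalization.surj (nonZeroDivisors R) cK
      dsimp only at hsec
      have hs0 : algebraMap R K (s : R) ≠ 0 := fun h =>
        nonZeroDivisors.coe_ne_zero s (halg (by rw [h, map_zero]))
      have hsmul : ∀ w : L, (s : R) • w = algebraMap R K (s : R) • w := fun w =>
        (algebraMap_smul K (s : R) w).symm
      have h1 : ι ((s : R) • m) = ι (a • m₀) := by
        rw [map_smul, map_smul, hsmul, ← hc, smul_smul, mul_comm, hsec]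
        exact algebraMap_smul K a (ι m₀)
      have h2 : (s : R) • m = a • m₀ := hι h1
      have h3 : algebraMap R K (s : R) • ι (φ m) = algebraMap R K (s : R) • (x • ι m) := by
        calc algebraMap R K (s : R) • ι (φ m) = (s : R) • ι (φ m) := (hsmul _).symm
          _ = ι ((s : R) • φ m) := (map_smul ι _ _).symm
          _ = ι (φ ((s : R) • m)) := by rw [map_smul φ]
          _ = ι (φ (a • m₀)) := by rw [h2]
          _ = ι (a • φ m₀) := by rw [map_smul φ]
          _ = a • ι (φ m₀) := map_smul ι _ _
          _ = a • (x • ι m₀) := by rw [hx]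
          _ = x • (a • ι m₀) := smul_comm _ _ _
          _ = x • ι (a • m₀) := by rw [map_smul ι]
          _ = x • ι ((s : R) • m) := by rw [h2]
          _ = x • ((s : R) • ι m) := by rw [map_smul ι]
          _ = (s : R) • (x • ι m) := smul_comm _ _ _
          _ = algebraMap R K (s : R) • (x • ι m) := hsmul _
      exact smul_right_injective L hs0 h3
    have hstab : ∀ n ∈ LinearMap.range ι, x • n ∈ LinearMap.range ι := by
      rintro _ ⟨m, rfl⟩
      exact ⟨φ m, hcomm m⟩
    have hfg : (LinearMap.range ι).FG := by
      rw [LinearMap.range_eq_map]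
      exact Submodule.FG.map _ (Module.Finite.fg_top)
    have hne : LinearMap.range ι ≠ ⊥ := by
      rw [Submodule.ne_bot_iff]
      exact ⟨ι m₀, ⟨m₀, rfl⟩, hv₀⟩
    have hint : IsIntegral R x :=
      isIntegral_of_smul_mem_submodule (LinearMap.range ι) hne hfg x hstab
    obtain ⟨r, hr⟩ := IsIntegrallyClosed.isIntegral_iff.1 hint
    refine ⟨r, ?_⟩
    apply LinearMap.ext
    intro m
    apply hι
    show ι ((algebraMap R (Module.End R M) r) m) = ι (φ m)
    rw [Module.algebraMap_end_apply, map_smul, hcomm m, ← hr, algebraMap_smul]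

theorem summand_of_comp_eq_id {R M N : Type*} [CommRing R] [AddCommGroup M] [Module R M]
    [AddCommGroup N] [Module R N] (f : M →ₗ[R] N) (g : N →ₗ[R] M)
    (h : ∀ m, g (f m) = m) : IsDirectSummand R M N := by
  have hinj : Function.Injective f := Function.LeftInverse.injective h
  refine ⟨LinearMap.range f, LinearMap.ker g, ⟨?_, ?_⟩, ⟨(LinearEquiv.ofInjective f hinj).symm⟩⟩
  · rw [disjoint_iff]
    apply Submodule.eq_bot_iff _ |>.2
    rintro x ⟨⟨m, rfl⟩, hk⟩
    have : m = 0 := by have := h m; rw [LinearMap.mem_ker.1 hk] at this; exact this.symm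
    simp [this]
  · rw [codisjoint_iff]
    rw [Submodule.eq_top_iff']
    intro n
    have : n = f (g n) + (n - f (g n)) := by abel
    rw [this]
    exact Submodule.add_mem_sup ⟨g n, rfl⟩ (by simp [LinearMap.mem_ker, h])

theorem key_le {R C M N₁ N₂ : Type*} [CommRing R] [IsLocalRing R]
    [AddCommGroup C] [Module R C] [AddCommGroup M] [Module R M]
    [AddCommGroup N₁] [Module R N₁] [AddCommGroup N₂] [Module R N₂]
    (hbij : Function.Bijective (algebraMap R (Module.End R M)))
    {a b : ℕ} (e₁ : C ≃ₗ[R] ((Fin a → M) × N₁)) (e₂ : C ≃ₗ[R] ((Fin b → M) × N₂))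
    (hn₁ : ¬ IsDirectSummand R M N₁) : b ≤ a := by
  classical
  set σ := algebraMap R (Module.End R M) with hσdef
  set τ := (RingEquiv.ofBijective σ hbij).symm with hτdef
  have hστ : ∀ φ : Module.End R M, σ (τ φ) = φ := fun φ =>
    (RingEquiv.ofBijective σ hbij).apply_symm_apply φ
  -- maps from the second decomposition
  let v : Fin b → (C →ₗ[R] M) := fun j =>
    LinearMap.proj j ∘ₗ LinearMap.fst R (Fin b → M) N₂ ∘ₗ e₂.toLinearMap
  let u : Fin b → (M →ₗ[R] C) := fun l =>
    e₂.symm.toLinearMap ∘ₗ LinearMap.inl R (Fin b → M) N₂ ∘ₗ LinearMap.single R (fun _ => M) l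
  let ι : Fin a → (M →ₗ[R] C) := fun i =>
    e₁.symm.toLinearMap ∘ₗ LinearMap.inl R (Fin a → M) N₁ ∘ₗ LinearMap.single R (fun _ => M) i
  let p : Fin a → (C →ₗ[R] M) := fun i =>
    LinearMap.proj i ∘ₗ LinearMap.fst R (Fin a → M) N₁ ∘ₗ e₁.toLinearMap
  let f : Fin b → (M →ₗ[R] N₁) := fun l =>
    LinearMap.snd R (Fin a → M) N₁ ∘ₗ e₁.toLinearMap ∘ₗ u l
  let g : Fin b → (N₁ →ₗ[R] M) := fun j =>
    v j ∘ₗ e₁.symm.toLinearMap ∘ₗ LinearMap.inr R (Fin a → M) N₁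
  let A : Matrix (Fin a) (Fin b) R := fun i l => τ (p i ∘ₗ u l)
  let B : Matrix (Fin b) (Fin a) R := fun j i => τ (v j ∘ₗ ι i)
  let Eo : Matrix (Fin b) (Fin b) R := fun j l => τ (g j ∘ₗ f l)
  have hdecomp : ∀ c : C, (∑ i, ι i (p i c)) +
      e₁.symm (0, (e₁ c).2) = c := by
    intro c
    simp only [ι, p, LinearMap.comp_apply, LinearEquiv.coe_coe, LinearMap.inl_apply,
      LinearMap.coe_single, LinearMap.fst_apply, LinearMap.proj_apply]
    rw [← map_sum e₁.symm, ← map_add e₁.symm]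
    have h1 : (∑ i, ((Pi.single i ((e₁ c).1 i), (0 : N₁)) : (Fin a → M) × N₁)) +
        ((0 : Fin a → M), (e₁ c).2) = e₁ c := by
      apply Prod.ext
      · simp [Prod.fst_sum, Finset.univ_sum_single]
      · simp [Prod.snd_sum]
    rw [h1, e₁.symm_apply_apply]
  have hvu : ∀ j l m, v j (u l m) = if j = l then m else 0 := by
    intro j l m
    simp only [v, u, LinearMap.comp_apply, LinearEquiv.coe_coe, LinearMap.inl_apply,
      LinearMap.coe_single, LinearMap.fst_apply, LinearMap.proj_apply,
      LinearEquiv.apply_symm_apply]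
    rw [Pi.single_apply]
  have hmain : (1 : Matrix (Fin b) (Fin b) R) = B * A + Eo := by
    ext j l
    apply hbij.1
    rw [Matrix.add_apply, Matrix.mul_apply, map_add, map_sum]
    simp only [A, B, Eo, map_mul, hστ]
    ext m
    have hEnd : ∀ (φ ψ : Module.End R M) (x : M), (φ * ψ) x = φ (ψ x) := fun _ _ _ => rfl
    rw [LinearMap.add_apply, LinearMap.sum_apply]
    simp only [hEnd, LinearMap.comp_apply]
    have h2 : (∑ i, v j (ι i (p i (u l m)))) + g j (f l m) = v j (u l m) := by
      have h3 : g j (f l m) = v j (e₁.symm (0, (e₁ (u l m)).2)) := by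
        simp only [g, f, LinearMap.comp_apply, LinearEquiv.coe_coe, LinearMap.inr_apply,
          LinearMap.snd_apply]
      rw [h3, ← map_sum (v j), ← map_add (v j)]
      rw [hdecomp (u l m)]
    rw [h2, hvu]
    rw [Matrix.one_apply]
    split
    · next h => subst h; simp [hσdef]
    · simp [hσdef]
  have hE : ∀ j l, Eo j l ∈ IsLocalRing.maximalIdeal R := by
    intro j l
    by_contra hmem
    have hunit : IsUnit (Eo j l) := by
      simpa [IsLocalRing.mem_maximalIdeal, mem_nonunits_iff, not_not] using hmem
    obtain ⟨w, hw⟩ := hunit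
    apply hn₁
    refine summand_of_comp_eq_id (f l) (((w⁻¹ : Rˣ) : R) • g j) ?_
    intro m
    have h4 : g j (f l m) = Eo j l • m := by
      have h5 : σ (Eo j l) = g j ∘ₗ f l := hστ _
      have := congrArg (fun φ : Module.End R M => φ m) h5
      simpa [hσdef, Module.algebraMap_end_apply] using this.symm
    simp only [LinearMap.smul_apply, h4, ← hw, smul_smul]
    rw [Units.inv_mul, one_smul]
  -- pass to the residue field
  let k := IsLocalRing.ResidueField R
  let π : R →+* k := IsLocalRing.residue R
  have hq : (1 : Matrix (Fin b) (Fin b) k) = B.map π * A.map π := by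
    have h0 := congrArg π.mapMatrix hmain
    rw [map_one, map_add] at h0
    rw [show π.mapMatrix (B * A) = B.map π * A.map π from
      (RingHom.mapMatrix_apply π (B * A)).trans Matrix.map_mul] at h0
    have hEzero : π.mapMatrix Eo = 0 := by
      ext j l
      simp only [RingHom.mapMatrix_apply, Matrix.map_apply, Matrix.zero_apply]; exact
        (IsLocalRing.residue_eq_zero_iff _).2 (hE j l)
    rw [hEzero, add_zero] at h0
    simpa [RingHom.mapMatrix_apply] using h0
  have hrank : (1 : Matrix (Fin b) (Fin b) k).rank = b := by
    rw [Matrix.rank_one, Fintype.card_fin]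
  calc b = (1 : Matrix (Fin b) (Fin b) k).rank := hrank.symm
    _ = (B.map π * A.map π).rank := by rw [hq]
    _ ≤ (A.map π).rank := Matrix.rank_mul_le_right _ _
    _ ≤ Fintype.card (Fin a) := Matrix.rank_le_card_height _
    _ = a := Fintype.card_fin a

-- STATEMENT 8

theorem stmt8 (R : Type*) [CommRing R] [IsDomain R] [IsNoetherianRing R] [IsLocalRing R]
    [IsIntegrallyClosed R]
    (C : Type*) [AddCommGroup C] [Module R C] [Module.Finite R C] (hC : IsS2 R C)
    (M : Type*) [AddCommGroup M] [Module R M] (hM : genRank R M = 1)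
    (N₁ : Type*) [AddCommGroup N₁] [Module R N₁]
    (N₂ : Type*) [AddCommGroup N₂] [Module R N₂]
    (a₁ a₂ : ℕ)
    (h₁ : Nonempty (C ≃ₗ[R] ((Fin a₁ → M) × N₁))) (h₂ : Nonempty (C ≃ₗ[R] ((Fin a₂ → M) × N₂)))
    (hn₁ : ¬ IsDirectSummand R M N₁) (hn₂ : ¬ IsDirectSummand R M N₂) :
    a₁ = a₂ := by
  classical
  obtain ⟨e₁⟩ := h₁
  obtain ⟨e₂⟩ := h₂
  by_cases hz : a₁ = 0 ∧ a₂ = 0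
  · rw [hz.1, hz.2]
  have hCtf : ∀ (r : R) (c : C), r ≠ 0 → r • c = 0 → c = 0 := fun r c hr hrc =>
    torsionfree_of_isS2 hC r c hr hrc
  have hsplit : ∃ (f : M →ₗ[R] C) (g : C →ₗ[R] M), ∀ m, g (f m) = m := by
    have hpos : 0 < a₁ ∨ 0 < a₂ := by
      rcases Nat.eq_zero_or_pos a₁ with h | h
      · rcases Nat.eq_zero_or_pos a₂ with h' | h'
        · exact absurd ⟨h, h'⟩ hz
        · exact Or.inr h'
      · exact Or.inl h
    rcases hpos with h | h
    · refine ⟨e₁.symm.toLinearMap ∘ₗ LinearMap.inl R (Fin a₁ → M) N₁ ∘ₗ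
        LinearMap.single R (fun _ => M) ⟨0, h⟩,
        LinearMap.proj (⟨0, h⟩ : Fin a₁) ∘ₗ LinearMap.fst R (Fin a₁ → M) N₁ ∘ₗ
          e₁.toLinearMap, fun m => ?_⟩
      simp [Pi.single_eq_same]
    · refine ⟨e₂.symm.toLinearMap ∘ₗ LinearMap.inl R (Fin a₂ → M) N₂ ∘ₗ
        LinearMap.single R (fun _ => M) ⟨0, h⟩,
        LinearMap.proj (⟨0, h⟩ : Fin a₂) ∘ₗ LinearMap.fst R (Fin a₂ → M) N₂ ∘ₗ
          e₂.toLinearMap, fun m => ?_⟩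
      simp [Pi.single_eq_same]
  obtain ⟨f, g, hgf⟩ := hsplit
  have hgsurj : Function.Surjective g := fun m => ⟨f m, hgf m⟩
  haveI : Module.Finite R M := Module.Finite.of_surjective g hgsurj
  have htf : ∀ (r : R) (m : M), r ≠ 0 → r • m = 0 → m = 0 := by
    intro r m hr hrm
    have h0 : r • f m = 0 := by rw [← map_smul, hrm, map_zero]
    have h1 : f m = 0 := hCtf r (f m) hr h0
    have := hgf m
    rw [h1, map_zero] at this
    exact this.symm
  have hbij := end_bijective htf hM
  exact le_antisymm (key_le hbij e₂ e₁ hn₂) (key_le hbij e₁ e₂ hn₁)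
end
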